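/- Every λ ∈ ℂ with ‖λA₀⁻¹D + λ²A₀⁻¹‖_{ℒ(H_{1/2})} < 1 belongs to the resolvent set of 𝒜. -/

import Mathlib

open scoped InnerProductSpace ComplexConjugate
open Filter

/-- Abstract setup for the second order equation `z̈ + A₀ z + D ż = 0`:
`Hhalf` plays the role of `H_{1/2} = 𝒟(A₀^{1/2})` with the norm `‖A₀^{1/2}·‖`, `H` is the
pivot Hilbert space and `Hm` is the dual `H_{-1/2}`; `ι : H_{1/2} → H` and `j : H → H_{-1/2}`
are the (dense, injective, continuous) inclusions; the uniformly positive self-adjoint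
operator `A₀` induces an isometric isomorphism `A₀ : H_{1/2} → H_{-1/2}`; the damping
operator `D : H_{1/2} → H_{-1/2}` is bounded, and `A₀^{-1/2} D A₀^{-1/2}` is self-adjoint
nonnegative, expressed via the duality pairing
`⟨u, z⟩_{H_{-1/2}×H_{1/2}} = ⟪A₀⁻¹ u, z⟫_{H_{1/2}}`. -/
structure BeamSetup (Hhalf H Hm : Type*)
    [NormedAddCommGroup Hhalf] [InnerProductSpace ℂ Hhalf] [CompleteSpace Hhalf]
    [NormedAddCommGroup H] [InnerProductSpace ℂ H] [CompleteSpace H]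
    [NormedAddCommGroup Hm] [InnerProductSpace ℂ Hm] [CompleteSpace Hm] : Type _ where
  ι : Hhalf →L[ℂ] H
  ι_inj : Function.Injective ι
  ι_dense : DenseRange ι
  j : H →L[ℂ] Hm
  j_inj : Function.Injective j
  A₀ : Hhalf ≃ₗᵢ[ℂ] Hm
  compat : ∀ (y : H) (z : Hhalf), ⟪A₀.symm (j y), z⟫_ℂ = ⟪y, ι z⟫_ℂ
  D : Hhalf →L[ℂ] Hm
  D_symm : ∀ z w : Hhalf, ⟪A₀.symm (D z), w⟫_ℂ = ⟪z, A₀.symm (D w)⟫_ℂ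
  D_nonneg : ∀ z : Hhalf, 0 ≤ (⟪A₀.symm (D z), z⟫_ℂ).re

namespace BeamSetup

variable {Hhalf H Hm : Type*}
    [NormedAddCommGroup Hhalf] [InnerProductSpace ℂ Hhalf] [CompleteSpace Hhalf]
    [NormedAddCommGroup H] [InnerProductSpace ℂ H] [CompleteSpace H]
    [NormedAddCommGroup Hm] [InnerProductSpace ℂ Hm] [CompleteSpace Hm]
    (S : BeamSetup Hhalf H Hm)

/-- `A₀⁻¹ : H_{-1/2} → H_{1/2}` as a continuous linear map. -/
noncomputable def Ai : Hm →L[ℂ] Hhalf :=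
  (S.A₀.symm.toContinuousLinearEquiv : Hm ≃L[ℂ] Hhalf)

/-- `A₀⁻¹ D` as a bounded operator on `H_{1/2}`. -/
noncomputable def T : Hhalf →L[ℂ] Hhalf := S.Ai.comp S.D

/-- `A₀⁻¹ : H → H_{1/2}`. -/
noncomputable def Ainv : H →L[ℂ] Hhalf := S.Ai.comp S.j

/-- `A₀⁻¹` considered as a bounded operator on `H_{1/2}`. -/
noncomputable def AinvR : Hhalf →L[ℂ] Hhalf := S.Ainv.comp S.ι

/-- `A₀⁻¹` considered as a bounded operator on `H`. -/
noncomputable def AinvH : H →L[ℂ] H := S.ι.comp S.Ainv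

/-- `λ` is an eigenvalue of the operator matrix `𝒜 = [[0, I], [-A₀, -D]]` with domain
`𝒟(𝒜) = {(z,w) ∈ H_{1/2} × H_{1/2} : A₀ z + D w ∈ H}`: there is a nonzero
`(z, ι w) ∈ 𝒟(𝒜)` (the domain condition being `j y = A₀ z + D w`, so that
`𝒜 (z, ι w) = (w, -y)`) with `𝒜 (z, ι w) = λ • (z, ι w)`. -/
def IsEigenvalue (lam : ℂ) : Prop :=
  ∃ (z w : Hhalf) (y : H), S.j y = S.A₀ z + S.D w ∧
    ((z, S.ι w) : Hhalf × H) ≠ 0 ∧ w = lam • z ∧ -y = lam • S.ι w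

/-- `λ` belongs to the resolvent set of `𝒜`: there is a bounded operator `R` on
`H_{1/2} × H` mapping onto `𝒟(𝒜)` which inverts `𝒜 - λ` from both sides. -/
def InResolvent (lam : ℂ) : Prop :=
  ∃ R : (Hhalf × H) →L[ℂ] (Hhalf × H),
    (∀ q : Hhalf × H, ∃ (z w : Hhalf) (y : H),
        R q = (z, S.ι w) ∧ S.j y = S.A₀ z + S.D w ∧
        ((w, -y) : Hhalf × H) - lam • ((z, S.ι w) : Hhalf × H) = q) ∧
    (∀ (z w : Hhalf) (y : H), S.j y = S.A₀ z + S.D w →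
        R (((w, -y) : Hhalf × H) - lam • ((z, S.ι w) : Hhalf × H)) = (z, S.ι w))


end BeamSetup

open BeamSetup

/-- Every `λ ∈ ℂ` with `‖λ A₀⁻¹ D + λ² A₀⁻¹‖_{ℒ(H_{1/2})} < 1` belongs to
the resolvent set of `𝒜`. -/
theorem statement5 {Hhalf H Hm : Type*}
    [NormedAddCommGroup Hhalf] [InnerProductSpace ℂ Hhalf] [CompleteSpace Hhalf]
    [NormedAddCommGroup H] [InnerProductSpace ℂ H] [CompleteSpace H]
    [NormedAddCommGroup Hm] [InnerProductSpace ℂ Hm] [CompleteSpace Hm]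
    (S : BeamSetup Hhalf H Hm) (lam : ℂ)
    (h : ‖lam • S.T + lam ^ 2 • S.AinvR‖ < 1) :
    S.InResolvent lam := by
  classical
  set K : Hhalf →L[ℂ] Hhalf := lam • S.T + lam ^ 2 • S.AinvR with hK
  have hKnorm : ‖-K‖ < 1 := by rw [norm_neg]; exact h
  set u : (Hhalf →L[ℂ] Hhalf)ˣ := Units.oneSub (-K) hKnorm with hu
  have huval : (u : Hhalf →L[ℂ] Hhalf) = 1 + K := by
    simp [hu, Units.oneSub, sub_neg_eq_add]
  set Binv : Hhalf →L[ℂ] Hhalf := ↑u⁻¹ with hBinv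
  have hBl : ∀ x : Hhalf, Binv (x + K x) = x := by
    intro x
    have h1 := congrArg (fun A : Hhalf →L[ℂ] Hhalf => A x) u.inv_mul
    simpa [huval, ContinuousLinearMap.mul_apply, ContinuousLinearMap.add_apply,
      ContinuousLinearMap.one_apply] using h1
  have hBr : ∀ x : Hhalf, Binv x + K (Binv x) = x := by
    intro x
    have h1 := congrArg (fun A : Hhalf →L[ℂ] Hhalf => A x) u.mul_inv
    simpa [huval, ContinuousLinearMap.mul_apply, ContinuousLinearMap.add_apply,
      ContinuousLinearMap.one_apply] using h1
  have hAi : ∀ x : Hm, S.Ai x = S.A₀.symm x := fun _ => rfl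
  set F : (Hhalf × H) →L[ℂ] Hhalf :=
    (S.T + lam • S.AinvR).comp (ContinuousLinearMap.fst ℂ Hhalf H)
      + S.Ainv.comp (ContinuousLinearMap.snd ℂ Hhalf H) with hF
  set Z : (Hhalf × H) →L[ℂ] Hhalf := -(Binv.comp F) with hZdef
  set W : (Hhalf × H) →L[ℂ] Hhalf := ContinuousLinearMap.fst ℂ Hhalf H + lam • Z with hWdef
  have hFapp : ∀ (f : Hhalf) (g : H),
      F (f, g) = S.T f + lam • S.AinvR f + S.Ainv g := by
    intro f g
    simp [hF, ContinuousLinearMap.add_apply, ContinuousLinearMap.comp_apply,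
      ContinuousLinearMap.smul_apply]
  refine ⟨Z.prod (S.ι.comp W), ?_, ?_⟩
  · rintro ⟨f, g⟩
    set z : Hhalf := Z (f, g) with hz
    set w : Hhalf := f + lam • z with hw
    have hzK : z + K z = -(F (f, g)) := by
      have h1 := hBr (F (f, g))
      have hz' : z = -(Binv (F (f, g))) := by
        simp [hz, hZdef, ContinuousLinearMap.neg_apply, ContinuousLinearMap.comp_apply]
      rw [hz', map_neg, ← neg_add, h1]
    have hzK' : z + (lam • S.T z + lam ^ 2 • S.AinvR z)
        = -(S.T f + lam • S.AinvR f + S.Ainv g) := by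
      have h2 := hzK
      rw [hFapp] at h2
      simpa only [hK, ContinuousLinearMap.add_apply, ContinuousLinearMap.smul_apply] using h2
    refine ⟨z, w, -g - lam • S.ι w, ?_, ?_, ?_⟩
    · simp [ContinuousLinearMap.prod_apply, ContinuousLinearMap.comp_apply, hWdef,
        ContinuousLinearMap.add_apply, ContinuousLinearMap.smul_apply, ← hz, hw]
    · apply S.A₀.symm.injective
      have e1 : S.A₀.symm (S.j (-g - lam • S.ι w)) = -(S.Ainv g) - lam • S.AinvR w := by
        simp [← hAi, BeamSetup.Ainv, BeamSetup.AinvR, ContinuousLinearMap.comp_apply,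
          map_sub, map_smul, map_neg]
      have e2 : S.A₀.symm (S.A₀ z + S.D w) = z + S.T w := by
        rw [map_add, LinearIsometryEquiv.symm_apply_apply]
        exact congrArg (z + ·) (hAi _).symm
      rw [e1, e2, hw]
      simp only [map_add, map_smul]
      linear_combination (norm := module) -hzK'
    · simp only [Prod.smul_mk, Prod.mk_sub_mk, Prod.mk.injEq]
      exact ⟨by rw [hw]; abel, by abel⟩
  · intro z w y hy
    set f : Hhalf := w - lam • z with hf
    set g : H := -y - lam • S.ι w with hg
    have hq : ((w, -y) : Hhalf × H) - lam • ((z, S.ι w) : Hhalf × H) = (f, g) := by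
      rw [Prod.smul_mk, Prod.mk_sub_mk]
    rw [hq]
    have hAy : S.Ainv y = z + S.T w := by
      have h1 : S.Ai (S.j y) = S.Ai (S.A₀ z + S.D w) := congrArg _ hy
      have h2 : S.Ai (S.A₀ z + S.D w) = z + S.T w := by
        rw [hAi, map_add, LinearIsometryEquiv.symm_apply_apply]
        exact congrArg (z + ·) (hAi _).symm
      have h3 : S.Ai (S.j y) = S.Ainv y := rfl
      rw [← h3, h1, h2]
    have hFq : F (f, g) = -(z + K z) := by
      rw [hFapp]
      have hAiw : S.Ainv (S.ι w) = S.AinvR w := rfl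
      simp only [hK, hf, hg, map_sub, map_smul, map_neg, hAiw,
        ContinuousLinearMap.add_apply, ContinuousLinearMap.smul_apply]
      linear_combination (norm := module) -hAy
    have hZq : Z (f, g) = z := by
      have hz' : Z (f, g) = -(Binv (F (f, g))) := by
        simp [hZdef, ContinuousLinearMap.neg_apply, ContinuousLinearMap.comp_apply]
      rw [hz', hFq, map_neg, neg_neg, hBl]
    have hWq : W (f, g) = w := by
      rw [hWdef]
      simp only [ContinuousLinearMap.add_apply, ContinuousLinearMap.smul_apply,
        ContinuousLinearMap.coe_fst', hZq]
      rw [hf]; abel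
    simp [ContinuousLinearMap.prod_apply, ContinuousLinearMap.comp_apply, hZq, hWq]
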